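/- Second-order oracle bound: under the assumption L_fair(wv_ρ) ≤ P_D(E_{f∼ρ}[ℓ_fair(f,x)] ≥ 1/2), one has L_fair(wv_ρ) ≤ 4·E_{(f,f')∼ρ×ρ}[L_fair(f,f')]. -/
import Mathlib


open MeasureTheory

private lemma bdd_integrable {α : Type*} [MeasurableSpace α] (μ : Measure α)
    [IsProbabilityMeasure μ] (h : α → ℝ) (hm : Measurable h) (hb : ∀ a, |h a| ≤ 1) :
    Integrable h μ := by
  refine (integrable_const (1:ℝ)).mono' hm.aestronglyMeasurable ?_
  exact Filter.Eventually.of_forall hb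

/-- Second-order oracle bound: under
`L_fair(wv_ρ) ≤ P_D(E_ρ[ℓ_fair(f,x)] ≥ 1/2)`, one has
`L_fair(wv_ρ) ≤ 4·E_{ρ²}[L_fair(f,f')]`. -/
theorem stmt4 {X F : Type*} [MeasurableSpace X] [MeasurableSpace F]
    (D : Measure X) [IsProbabilityMeasure D] (ρ : Measure F) [IsProbabilityMeasure ρ]
    (ℓ : F → X → ℝ) (hmeas : Measurable (Function.uncurry ℓ))
    (hbin : ∀ f x, ℓ f x = 0 ∨ ℓ f x = 1)
    (Lwv : ℝ)
    (hwv : Lwv ≤ (D {x | 1 / 2 ≤ ∫ f, ℓ f x ∂ρ}).toReal) :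
    Lwv ≤ 4 * ∫ f, ∫ f', ∫ x, ℓ f x * ℓ f' x ∂D ∂ρ ∂ρ := by
  classical
  have hℓ0 : ∀ f x, 0 ≤ ℓ f x := fun f x => by rcases hbin f x with h | h <;> simp [h]
  have hℓ1 : ∀ f x, ℓ f x ≤ 1 := fun f x => by rcases hbin f x with h | h <;> simp [h]
  have hℓb : ∀ f x, |ℓ f x| ≤ 1 := fun f x => abs_le.2 ⟨by linarith [hℓ0 f x], hℓ1 f x⟩
  set g : X → ℝ := fun x => ∫ f, ℓ f x ∂ρ with hgdef
  have hgm : Measurable g := by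
    have := hmeas.stronglyMeasurable.integral_prod_left (μ := ρ)
    exact this.measurable
  have hg0 : ∀ x, 0 ≤ g x := fun x => integral_nonneg fun f => hℓ0 f x
  have hg1 : ∀ x, g x ≤ 1 := fun x => by
    calc g x ≤ ∫ _, (1:ℝ) ∂ρ := by
          refine integral_mono_of_nonneg (Filter.Eventually.of_forall fun f => hℓ0 f x)
            (integrable_const 1) (Filter.Eventually.of_forall fun f => hℓ1 f x)
      _ = 1 := by simp
  have hgb : ∀ x, |g x| ≤ 1 := fun x => abs_le.2 ⟨by linarith [hg0 x], hg1 x⟩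
  -- Markov (second order)
  have hg2int : Integrable (fun x => g x * g x) D := by
    refine bdd_integrable D _ (hgm.mul hgm) fun x => ?_
    rw [abs_mul]
    nlinarith [hgb x, abs_nonneg (g x)]
  have hsub : {x | 1 / 2 ≤ g x} ⊆ {x | (1:ℝ)/4 ≤ g x * g x} := by
    intro x hx
    simp only [Set.mem_setOf_eq] at hx ⊢
    nlinarith
  have hmarkov : (1:ℝ)/4 * (D {x | (1:ℝ)/4 ≤ g x * g x}).toReal ≤ ∫ x, g x * g x ∂D :=
    mul_meas_ge_le_integral_of_nonneg
      (Filter.Eventually.of_forall fun x => mul_nonneg (hg0 x) (hg0 x)) hg2int _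
  have hmono : (D {x | 1 / 2 ≤ g x}).toReal ≤ (D {x | (1:ℝ)/4 ≤ g x * g x}).toReal := by
    refine ENNReal.toReal_mono (measure_ne_top _ _) (measure_mono hsub)
  -- Fubini
  have hint2 : ∀ f : F, Integrable (Function.uncurry fun f' x => ℓ f x * ℓ f' x) (ρ.prod D) := by
    intro f
    refine bdd_integrable _ _ ?_ fun p => ?_
    · exact ((hmeas.comp (measurable_const.prodMk measurable_snd)).mul
        (hmeas.comp (measurable_fst.prodMk measurable_snd)))
    · rw [Function.uncurry]
      rw [abs_mul]
      nlinarith [hℓb f p.2, hℓb p.1 p.2, abs_nonneg (ℓ f p.2), abs_nonneg (ℓ p.1 p.2)]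
  have hstepA : ∀ f : F, ∫ f', ∫ x, ℓ f x * ℓ f' x ∂D ∂ρ = ∫ x, ℓ f x * g x ∂D := by
    intro f
    rw [integral_integral_swap (hint2 f)]
    refine integral_congr_ae (Filter.Eventually.of_forall fun x => ?_)
    simp only [hgdef]
    rw [← integral_const_mul]
  have hint3 : Integrable (Function.uncurry fun f x => ℓ f x * g x) (ρ.prod D) := by
    refine bdd_integrable _ _ ?_ fun p => ?_
    · exact hmeas.mul (hgm.comp measurable_snd)
    · rw [Function.uncurry, abs_mul]
      nlinarith [hℓb p.1 p.2, hgb p.2, abs_nonneg (ℓ p.1 p.2), abs_nonneg (g p.2)]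
  have hfub : ∫ f, ∫ f', ∫ x, ℓ f x * ℓ f' x ∂D ∂ρ ∂ρ = ∫ x, g x * g x ∂D := by
    have h1 : ∫ f, ∫ f', ∫ x, ℓ f x * ℓ f' x ∂D ∂ρ ∂ρ = ∫ f, ∫ x, ℓ f x * g x ∂D ∂ρ :=
      integral_congr_ae (Filter.Eventually.of_forall hstepA)
    rw [h1, integral_integral_swap hint3]
    refine integral_congr_ae (Filter.Eventually.of_forall fun x => ?_)
    simp only [hgdef]
    rw [integral_mul_const]
  rw [hfub]
  calc Lwv ≤ (D {x | 1 / 2 ≤ g x}).toReal := hwv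
    _ ≤ (D {x | (1:ℝ)/4 ≤ g x * g x}).toReal := hmono
    _ ≤ 4 * ∫ x, g x * g x ∂D := by linarith
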